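/- Let X be a nonempty topological space and g : X → X a homeomorphism. Suppose there exists an open set V ⊆ X such that the closure of g(V) is contained in V, the union ⋃_{k ∈ ℤ} g^k(V) equals X, and the intersection ⋂_{k ∈ ℤ} g^k(V) is empty. Then for every finite collection of points x₁, …, x_l ∈ X, the closure of the union of their forward orbits ⋃_{i=1}^{l} {gⁿ(x_i) : n ∈ ℕ} is a proper subset of X (i.e., the forward orbits of finitely many points can never have dense union). -/

import Mathlib

/-- If a homeomorphism `g` of a nonempty topological space `X` admits an open set `V`
with `closure (g '' V) ⊆ V`, `⋃ k : ℤ, g^k '' V = univ` and `⋂ k : ℤ, g^k '' V = ∅`,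
then the union of the forward orbits of any finitely many points is never dense:
its closure is a proper subset of `X`. -/
theorem stmt_0 {X : Type*} [TopologicalSpace X] [Nonempty X] (g : X ≃ₜ X)
    (hV : ∃ V : Set X, IsOpen V ∧ closure (⇑g '' V) ⊆ V ∧
      (⋃ k : ℤ, ⇑(g.toEquiv ^ k) '' V) = Set.univ ∧
      (⋂ k : ℤ, ⇑(g.toEquiv ^ k) '' V) = ∅) :
    ∀ (l : ℕ) (x : Fin l → X),
      closure (⋃ i : Fin l, Set.range fun n : ℕ => (⇑g)^[n] (x i)) ≠ Set.univ := by
  obtain ⟨V, hVopen, hcl, hun, hint⟩ := hV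
  set S : ℤ → Set X := fun k => ⇑(g.toEquiv ^ k) '' V with hS
  -- each power of g.toEquiv is (the coercion of) a homeomorphism
  have hhomeo : ∀ k : ℤ, ∃ h : X ≃ₜ X, ⇑h = ⇑(g.toEquiv ^ k) := by
    intro k
    induction k using Int.induction_on with
    | zero => exact ⟨Homeomorph.refl X, by simp⟩
    | succ n ih =>
      obtain ⟨h, hh⟩ := ih
      refine ⟨g.trans h, ?_⟩
      rw [zpow_add_one]
      ext v
      simp [hh]
    | pred n ih =>
      obtain ⟨h, hh⟩ := ih
      refine ⟨g.symm.trans h, ?_⟩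
      rw [zpow_sub_one]
      ext v
      simp [hh]
  -- translation: g.toEquiv^a maps S k onto S (a + k)
  have htrans : ∀ a k : ℤ, ⇑(g.toEquiv ^ a) '' S k = S (a + k) := by
    intro a k
    simp only [hS, Set.image_image]
    have : ∀ v, (g.toEquiv ^ a) ((g.toEquiv ^ k) v) = (g.toEquiv ^ (a + k)) v := by
      intro v
      rw [zpow_add]
      rfl
    simp only [this]
  have hgV : ⇑g '' V ⊆ V := subset_trans subset_closure hcl
  -- S is antitone
  have hstep : ∀ k : ℤ, S (k + 1) ⊆ S k := by
    intro k
    have h1 : S (k + 1) = ⇑(g.toEquiv ^ k) '' (⇑g '' V) := by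
      rw [hS]
      simp only [Set.image_image]
      have : ∀ v, (g.toEquiv ^ (k + 1)) v = (g.toEquiv ^ k) (g v) := by
        intro v
        rw [zpow_add_one]
        rfl
      simp only [this]
    rw [h1]
    exact Set.image_mono hgV
  have hanti : ∀ m k : ℤ, m ≤ k → S k ⊆ S m := by
    intro m k hmk
    obtain ⟨d, rfl⟩ : ∃ d : ℕ, k = m + d := ⟨(k - m).toNat, by omega⟩
    induction d with
    | zero => simp
    | succ n ih =>
      refine subset_trans ?_ (ih (by omega))
      rw [show (m + (↑(n + 1) : ℤ)) = (m + n) + 1 by push_cast; ring]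
      exact hstep _
  -- closure (S k) ⊆ S (k - 1)
  have hclS : ∀ k : ℤ, closure (S k) ⊆ S (k - 1) := by
    intro k
    obtain ⟨h, hh⟩ := hhomeo (k - 1)
    have h1 : S k = ⇑(g.toEquiv ^ (k - 1)) '' (⇑g '' V) := by
      have h2 := htrans (k - 1) 1
      rw [show (k - 1) + 1 = k by ring] at h2
      rw [← h2, hS]
      congr 1
    rw [h1, ← hh, ← Homeomorph.image_closure]
    exact subset_trans (Set.image_mono hcl) (subset_of_eq (by rw [hh]))
  -- forward orbits stay in S k
  have horbit : ∀ (k : ℤ) (p : X), p ∈ S k → ∀ n : ℕ, (⇑g)^[n] p ∈ S k := by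
    intro k p hp n
    induction n generalizing p with
    | zero => exact hp
    | succ n ih =>
      rw [Function.iterate_succ_apply]
      apply ih
      apply hstep k
      have := htrans 1 k
      rw [show (1 : ℤ) + k = k + 1 by ring] at this
      rw [← this]
      refine ⟨p, hp, ?_⟩
      rw [zpow_one]
      rfl
  -- no S k is all of X
  have hne : ∀ k : ℤ, S k ≠ Set.univ := by
    intro k hk
    obtain ⟨p⟩ := ‹Nonempty X›
    have hp : p ∉ ⋂ m : ℤ, S m := by rw [hint]; exact Set.notMem_empty p
    obtain ⟨m, hm⟩ := by simpa [Set.mem_iInter] using hp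
    apply hm
    have h1 : (g.toEquiv ^ (m - k)) ((g.toEquiv ^ (k - m)) p) ∈ S m := by
      have h2 := htrans (m - k) k
      rw [show m - k + k = m by ring] at h2
      rw [← h2, hk]
      exact Set.mem_image_of_mem _ (Set.mem_univ _)
    rwa [show (g.toEquiv ^ (m - k)) ((g.toEquiv ^ (k - m)) p) = p from by
      rw [← Equiv.Perm.mul_apply, ← zpow_add, show m - k + (k - m) = 0 by ring, zpow_zero]
      rfl] at h1
  intro l x hcontra
  have hx : ∀ i : Fin l, ∃ k : ℤ, x i ∈ S k := by
    intro i
    have : x i ∈ ⋃ k : ℤ, S k := by rw [hun]; trivial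
    simpa using this
  choose κ hκ using hx
  rcases Nat.eq_zero_or_pos l with rfl | hl
  · simp only [Set.iUnion_of_empty, closure_empty] at hcontra
    obtain ⟨p⟩ := ‹Nonempty X›
    exact absurd (hcontra ▸ Set.mem_univ p) (Set.notMem_empty p)
  · have : Nonempty (Fin l) := ⟨⟨0, hl⟩⟩
    obtain ⟨i₀, hi₀⟩ := Finite.exists_min κ
    set K := κ i₀
    have hsub : (⋃ i : Fin l, Set.range fun n : ℕ => (⇑g)^[n] (x i)) ⊆ S K := by
      intro p hp
      simp only [Set.mem_iUnion, Set.mem_range] at hp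
      obtain ⟨i, n, rfl⟩ := hp
      exact hanti K (κ i) (hi₀ i) (horbit (κ i) (x i) (hκ i) n)
    have hfin : closure (⋃ i : Fin l, Set.range fun n : ℕ => (⇑g)^[n] (x i)) ⊆ S (K - 1) :=
      subset_trans (closure_mono hsub) (hclS K)
    rw [hcontra] at hfin
    exact hne (K - 1) (Set.univ_subset_iff.mp hfin)
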